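/- Gaussian-mixture representation of the IMQ kernel Stein discrepancy (identity established in the proof of Corollary 2): let T : X → X be a bounded linear operator, S = T*T, and assume ∫ ‖x‖² dQ(x) < ∞ and ∫ ‖C DU(x)‖² dQ(x) < ∞. Let γ be the standard Gaussian measure N(0,1) on ℝ. Then ∫_X ∫_X h_v^{IMQ-T}(x,x') dQ(x) dQ(x') = ∫_ℝ [ ∫_X ∫_X h_v^{SE-ηT}(x,x') dQ(x) dQ(x') ] dγ(η). -/

import Mathlib

open MeasureTheory ProbabilityTheory Complex Filter
open scoped RealInnerProductSpace

/-- The explicit vectorised Stein kernel of the SE-`ηT` kernel. -/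
noncomputable def hvSE {X : Type*} [NormedAddCommGroup X] [InnerProductSpace ℝ X]
    [CompleteSpace X] (C T : X →L[ℝ] X) (DU : X → X) (e : ℕ → X) (l : ℕ → ℝ)
    (η : ℝ) (x y : X) : ℝ :=
  letI S := (ContinuousLinearMap.adjoint T).comp T
  Real.exp (-(η ^ 2 / 2) * ‖T (x - y)‖ ^ 2) *
    (⟪x + C (DU x), y + C (DU y)⟫
      - η ^ 2 * ⟪S (C (x - y)), x - y⟫
      - η ^ 2 * ⟪S (C (C (DU x) - C (DU y))), x - y⟫
      + η ^ 2 * (∑' i, l i ^ 2 * ⟪S (e i), e i⟫)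
      - η ^ 4 * ‖C (S (x - y))‖ ^ 2)

/-- The explicit vectorised Stein kernel of the IMQ-`T` kernel. -/
noncomputable def hvIMQ {X : Type*} [NormedAddCommGroup X] [InnerProductSpace ℝ X]
    [CompleteSpace X] (C T : X →L[ℝ] X) (DU : X → X) (e : ℕ → X) (l : ℕ → ℝ)
    (x y : X) : ℝ :=
  letI S := (ContinuousLinearMap.adjoint T).comp T
  letI kk := (‖T (x - y)‖ ^ 2 + 1) ^ (-(1 / 2) : ℝ)
  kk * ⟪x + C (DU x), y + C (DU y)⟫
    + kk ^ 3 * ((∑' i, l i ^ 2 * ⟪S (e i), e i⟫)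
        - ⟪S (C (x - y)), x - y⟫
        - ⟪S (C (C (DU x) - C (DU y))), x - y⟫)
    - 3 * kk ^ 5 * ‖C (S (x - y))‖ ^ 2


section helpers
open Real


lemma integrable_pow_mul_exp_neg_mul_sq' {b : ℝ} (hb : 0 < b) (n : ℕ) :
    Integrable fun x : ℝ => x ^ n * Real.exp (-b * x ^ 2) := by
  have h : (-1 : ℝ) < n := lt_of_lt_of_le neg_one_lt_zero (Nat.cast_nonneg n)
  simpa [Real.rpow_natCast] using integrable_rpow_mul_exp_neg_mul_sq hb h

lemma integral_sq_mul_exp_neg_mul_sq {b : ℝ} (hb : 0 < b) :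
    ∫ x : ℝ, x ^ 2 * Real.exp (-b * x ^ 2) = Real.sqrt (π / b) / (2 * b) := by
  have hderiv : ∀ x : ℝ, HasDerivAt (fun x : ℝ => x * Real.exp (-b * x ^ 2))
      (Real.exp (-b * x ^ 2) - 2 * b * (x ^ 2 * Real.exp (-b * x ^ 2))) x := by
    intro x
    have h := (hasDerivAt_id x).mul (((hasDerivAt_pow 2 x).const_mul (-b)).exp)
    refine h.congr_deriv ?_
    simp only [id_eq, Nat.cast_ofNat, pow_one]
    ring
  have hint : Integrable (fun x : ℝ =>
      Real.exp (-b * x ^ 2) - 2 * b * (x ^ 2 * Real.exp (-b * x ^ 2))) := by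
    exact (integrable_exp_neg_mul_sq hb).sub
      ((integrable_pow_mul_exp_neg_mul_sq' hb 2).const_mul (2 * b))
  have hf : Integrable (fun x : ℝ => x * Real.exp (-b * x ^ 2)) := by
    simpa using integrable_pow_mul_exp_neg_mul_sq' hb 1
  have h0 := integral_eq_zero_of_hasDerivAt_of_integrable hderiv hint hf
  rw [integral_sub (integrable_exp_neg_mul_sq hb)
      ((integrable_pow_mul_exp_neg_mul_sq' hb 2).const_mul (2 * b)),
    integral_const_mul, integral_gaussian] at h0
  have hb' : (2 : ℝ) * b ≠ 0 := by positivity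
  field_simp at h0 ⊢
  linarith

lemma integral_pow4_mul_exp_neg_mul_sq {b : ℝ} (hb : 0 < b) :
    ∫ x : ℝ, x ^ 4 * Real.exp (-b * x ^ 2) = 3 * Real.sqrt (π / b) / (4 * b ^ 2) := by
  have hderiv : ∀ x : ℝ, HasDerivAt (fun x : ℝ => x ^ 3 * Real.exp (-b * x ^ 2))
      (3 * (x ^ 2 * Real.exp (-b * x ^ 2)) - 2 * b * (x ^ 4 * Real.exp (-b * x ^ 2))) x := by
    intro x
    have h := (hasDerivAt_pow 3 x).mul (((hasDerivAt_pow 2 x).const_mul (-b)).exp)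
    refine h.congr_deriv ?_
    simp only [id_eq, Nat.cast_ofNat, pow_one]
    ring
  have hint : Integrable (fun x : ℝ =>
      3 * (x ^ 2 * Real.exp (-b * x ^ 2)) - 2 * b * (x ^ 4 * Real.exp (-b * x ^ 2))) := by
    exact ((integrable_pow_mul_exp_neg_mul_sq' hb 2).const_mul 3).sub
      ((integrable_pow_mul_exp_neg_mul_sq' hb 4).const_mul (2 * b))
  have hf : Integrable (fun x : ℝ => x ^ 3 * Real.exp (-b * x ^ 2)) :=
    integrable_pow_mul_exp_neg_mul_sq' hb 3
  have h0 := integral_eq_zero_of_hasDerivAt_of_integrable hderiv hint hf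
  rw [integral_sub ((integrable_pow_mul_exp_neg_mul_sq' hb 2).const_mul 3)
      ((integrable_pow_mul_exp_neg_mul_sq' hb 4).const_mul (2 * b)),
    integral_const_mul, integral_const_mul, integral_sq_mul_exp_neg_mul_sq hb] at h0
  have hb' : (2 : ℝ) * b ≠ 0 := by positivity
  field_simp at h0 ⊢
  linarith

lemma integral_gaussianReal01 (g : ℝ → ℝ) :
    ∫ x, g x ∂(gaussianReal 0 1)
      = ∫ x, gaussianPDFReal 0 1 x * g x := by
  rw [gaussianReal_of_var_ne_zero 0 one_ne_zero]
  have hpdf : gaussianPDF 0 1 = fun x => ((gaussianPDFReal 0 1 x).toNNReal : ENNReal) := by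
    funext x; rfl
  rw [hpdf, integral_withDensity_eq_integral_smul
    ((measurable_gaussianPDFReal 0 1).real_toNNReal) g]
  congr 1
  funext x
  simp [NNReal.smul_def, Real.coe_toNNReal _ (gaussianPDFReal_nonneg 0 1 x)]

lemma integrable_gaussianReal01_iff (g : ℝ → ℝ) :
    Integrable g (gaussianReal 0 1)
      ↔ Integrable (fun x => gaussianPDFReal 0 1 x * g x) := by
  rw [gaussianReal_of_var_ne_zero 0 one_ne_zero]
  have hpdf : gaussianPDF 0 1 = fun x => ((gaussianPDFReal 0 1 x).toNNReal : ENNReal) := by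
    funext x; rfl
  rw [hpdf, integrable_withDensity_iff_integrable_smul
    ((measurable_gaussianPDFReal 0 1).real_toNNReal)]
  constructor <;> intro h <;> [skip; skip] <;>
  · refine h.congr (Filter.Eventually.of_forall fun x => ?_)
    simp [NNReal.smul_def, Real.coe_toNNReal _ (gaussianPDFReal_nonneg 0 1 x)]

lemma gaussianPDFReal01_eq (x : ℝ) :
    gaussianPDFReal 0 1 x = (Real.sqrt (2 * π))⁻¹ * Real.exp (-(1/2) * x ^ 2) := by
  rw [gaussianPDFReal_def]
  simp only [NNReal.coe_one, mul_one, sub_zero]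
  congr 1
  ring

lemma gauss_mix (a : ℝ) (ha : 0 ≤ a) (A B D : ℝ) :
    ∫ η, Real.exp (-(η ^ 2 / 2) * a) * (A + η ^ 2 * B + η ^ 4 * D) ∂(gaussianReal 0 1)
      = (a + 1) ^ (-(1/2) : ℝ) * A + ((a + 1) ^ (-(1/2) : ℝ)) ^ 3 * B
        + 3 * ((a + 1) ^ (-(1/2) : ℝ)) ^ 5 * D := by
  have hb : (0:ℝ) < (a + 1) / 2 := by linarith
  set b : ℝ := (a + 1) / 2 with hbdef
  set c : ℝ := (Real.sqrt (2 * π))⁻¹ with hcdef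
  rw [integral_gaussianReal01]
  have hfun : (fun x : ℝ => gaussianPDFReal 0 1 x
      * (Real.exp (-(x ^ 2 / 2) * a) * (A + x ^ 2 * B + x ^ 4 * D)))
      = fun x : ℝ => (c * A) * Real.exp (-b * x ^ 2)
        + (c * B) * (x ^ 2 * Real.exp (-b * x ^ 2))
        + (c * D) * (x ^ 4 * Real.exp (-b * x ^ 2)) := by
    funext x
    rw [gaussianPDFReal01_eq]
    have hexp : Real.exp (-(1/2) * x ^ 2) * Real.exp (-(x ^ 2 / 2) * a)
        = Real.exp (-b * x ^ 2) := by
      rw [← Real.exp_add]; congr 1; rw [hbdef]; ring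
    calc c * Real.exp (-(1/2) * x ^ 2) * (Real.exp (-(x ^ 2 / 2) * a) * (A + x ^ 2 * B + x ^ 4 * D))
        = (Real.exp (-(1/2) * x ^ 2) * Real.exp (-(x ^ 2 / 2) * a)) * (c * (A + x ^ 2 * B + x ^ 4 * D)) := by ring
      _ = Real.exp (-b * x ^ 2) * (c * (A + x ^ 2 * B + x ^ 4 * D)) := by rw [hexp]
      _ = _ := by ring
  rw [hfun]
  have h1 : Integrable (fun x : ℝ => c * A * Real.exp (-b * x ^ 2)) := by
    exact (integrable_exp_neg_mul_sq hb).const_mul _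
  have h2 : Integrable (fun x : ℝ => c * B * (x ^ 2 * Real.exp (-b * x ^ 2))) := by
    exact (integrable_pow_mul_exp_neg_mul_sq' hb 2).const_mul _
  have h3 : Integrable (fun x : ℝ => c * D * (x ^ 4 * Real.exp (-b * x ^ 2))) := by
    exact (integrable_pow_mul_exp_neg_mul_sq' hb 4).const_mul _
  have h12 : Integrable (fun x : ℝ => c * A * Real.exp (-b * x ^ 2)
      + c * B * (x ^ 2 * Real.exp (-b * x ^ 2))) := by exact h1.add h2
  rw [integral_add h12 h3, integral_add h1 h2,
    integral_const_mul, integral_const_mul, integral_const_mul,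
    integral_gaussian, integral_sq_mul_exp_neg_mul_sq hb, integral_pow4_mul_exp_neg_mul_sq hb]
  -- now pure arithmetic
  have hs2 : Real.sqrt (a + 1) ^ 2 = a + 1 := Real.sq_sqrt (by linarith)
  have hspos : (0:ℝ) < Real.sqrt (a + 1) := Real.sqrt_pos.mpr (by linarith)
  set s : ℝ := Real.sqrt (a + 1) with hsdef
  have hr : (a + 1) ^ (-(1/2) : ℝ) = s⁻¹ := by
    rw [Real.rpow_neg (by linarith), ← Real.sqrt_eq_rpow]
  have hsqrtpib : Real.sqrt (π / b) = Real.sqrt (2 * π) / s := by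
    rw [hsdef, ← Real.sqrt_div (by positivity : (0:ℝ) ≤ 2 * π)]
    congr 1
    rw [hbdef]
    have : a + 1 ≠ 0 := by linarith
    field_simp
  rw [hsqrtpib, hr, hbdef, hcdef, ← hs2]
  have hsne : s ≠ 0 := hspos.ne'
  have ht : (0:ℝ) < Real.sqrt (2 * π) := Real.sqrt_pos.mpr (by positivity)
  field_simp
  ring

lemma integrable_pow_gaussianReal01 (n : ℕ) :
    Integrable (fun x : ℝ => x ^ n) (gaussianReal 0 1) := by
  rw [integrable_gaussianReal01_iff]
  have h : (fun x : ℝ => gaussianPDFReal 0 1 x * x ^ n)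
      = fun x : ℝ => (Real.sqrt (2 * π))⁻¹ * (x ^ n * Real.exp (-(1/2) * x ^ 2)) := by
    funext x; rw [gaussianPDFReal01_eq]; ring
  rw [h]
  exact (integrable_pow_mul_exp_neg_mul_sq' (by norm_num) n).const_mul _


lemma hvSE_integral {X : Type*} [NormedAddCommGroup X] [InnerProductSpace ℝ X]
    [CompleteSpace X] (C T : X →L[ℝ] X) (DU : X → X) (e : ℕ → X) (l : ℕ → ℝ) (x y : X) :
    ∫ η, hvSE C T DU e l η x y ∂(gaussianReal 0 1) = hvIMQ C T DU e l x y := by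
  have hfun : (fun η => hvSE C T DU e l η x y)
      = fun η => Real.exp (-(η ^ 2 / 2) * (‖T (x - y)‖ ^ 2)) *
          (⟪x + C (DU x), y + C (DU y)⟫
            + η ^ 2 * ((∑' i, l i ^ 2 * ⟪((ContinuousLinearMap.adjoint T).comp T) (e i), e i⟫)
              - ⟪((ContinuousLinearMap.adjoint T).comp T) (C (x - y)), x - y⟫
              - ⟪((ContinuousLinearMap.adjoint T).comp T) (C (C (DU x) - C (DU y))), x - y⟫)
            + η ^ 4 * (-‖C (((ContinuousLinearMap.adjoint T).comp T) (x - y))‖ ^ 2)) := by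
    funext η; simp only [hvSE]; ring
  rw [hfun, gauss_mix _ (by positivity)]
  simp only [hvIMQ]
  ring


set_option maxHeartbeats 1000000

lemma abs_poly_bound (A B1 B2 tr t D0 K1 P η : ℝ)
    (hA : |A| ≤ P) (hB1 : |B1| ≤ 4 * K1 * P) (hB2 : |B2| ≤ 4 * K1 * P)
    (htr : |tr| ≤ t) (hD0u : D0 ≤ 4 * K1 ^ 2 * P) (hD0n : 0 ≤ D0)
    (hP1 : 1 ≤ P) (hK1 : 0 ≤ K1) :
    |A - η ^ 2 * B1 - η ^ 2 * B2 + η ^ 2 * tr - η ^ 4 * D0|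
      ≤ ((4 + 8 * K1 + t + 12 * K1 ^ 2) * (1 + η ^ 2 + η ^ 4)) * P := by
  obtain ⟨hA1, hA2⟩ := abs_le.mp hA
  obtain ⟨hB11, hB12⟩ := abs_le.mp hB1
  obtain ⟨hB21, hB22⟩ := abs_le.mp hB2
  obtain ⟨ht1, ht2⟩ := abs_le.mp htr
  have ht0 : 0 ≤ t := le_trans (abs_nonneg _) htr
  have hs : (0:ℝ) ≤ η ^ 2 := sq_nonneg η
  have hq : (0:ℝ) ≤ η ^ 4 := by positivity
  have hP0 : (0:ℝ) ≤ P := by linarith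
  have u1 : η ^ 2 * B1 ≤ η ^ 2 * (4 * K1 * P) := mul_le_mul_of_nonneg_left hB12 hs
  have l1 : η ^ 2 * (-(4 * K1 * P)) ≤ η ^ 2 * B1 := mul_le_mul_of_nonneg_left hB11 hs
  have u2 : η ^ 2 * B2 ≤ η ^ 2 * (4 * K1 * P) := mul_le_mul_of_nonneg_left hB22 hs
  have l2 : η ^ 2 * (-(4 * K1 * P)) ≤ η ^ 2 * B2 := mul_le_mul_of_nonneg_left hB21 hs
  have u3 : η ^ 2 * tr ≤ η ^ 2 * t := mul_le_mul_of_nonneg_left ht2 hs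
  have l3 : η ^ 2 * (-t) ≤ η ^ 2 * tr := mul_le_mul_of_nonneg_left ht1 hs
  have u4 : η ^ 4 * D0 ≤ η ^ 4 * (4 * K1 ^ 2 * P) := mul_le_mul_of_nonneg_left hD0u hq
  have l4 : 0 ≤ η ^ 4 * D0 := mul_nonneg hq hD0n
  rw [abs_le]
  constructor <;>
    nlinarith [mul_nonneg hs hP0, mul_nonneg hq hP0, mul_nonneg (mul_nonneg hs hP0) hK1,
      mul_nonneg (mul_nonneg hq hP0) hK1, mul_nonneg (mul_nonneg hs hP0) ht0,
      mul_nonneg (mul_nonneg hq hP0) ht0, mul_nonneg hK1 hP0, mul_nonneg ht0 hP0,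
      mul_nonneg (mul_nonneg hK1 hK1) hP0, mul_nonneg (mul_nonneg hq hP0) (mul_nonneg hK1 hK1),
      mul_nonneg (mul_nonneg hs hP0) (mul_nonneg hK1 hK1),
      mul_nonneg hs (mul_nonneg ht0 (sub_nonneg.mpr hP1)),
      mul_nonneg hq (mul_nonneg ht0 (sub_nonneg.mpr hP1))]

lemma abs_imq_bound (A B1 B2 tr t D0 K1 P kk : ℝ)
    (hA : |A| ≤ P) (hB1 : |B1| ≤ 4 * K1 * P) (hB2 : |B2| ≤ 4 * K1 * P)
    (htr : |tr| ≤ t) (hD0u : D0 ≤ 4 * K1 ^ 2 * P) (hD0n : 0 ≤ D0)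
    (hP1 : 1 ≤ P) (hK1 : 0 ≤ K1) (hkk0 : 0 ≤ kk) (hkk1 : kk ≤ 1) :
    |kk * A + kk ^ 3 * (tr - B1 - B2) - 3 * kk ^ 5 * D0|
      ≤ (4 + 8 * K1 + t + 12 * K1 ^ 2) * P := by
  obtain ⟨hA1, hA2⟩ := abs_le.mp hA
  obtain ⟨hB11, hB12⟩ := abs_le.mp hB1
  obtain ⟨hB21, hB22⟩ := abs_le.mp hB2
  obtain ⟨ht1, ht2⟩ := abs_le.mp htr
  have ht0 : 0 ≤ t := le_trans (abs_nonneg _) htr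
  have hP0 : (0:ℝ) ≤ P := by linarith
  have h3 : 0 ≤ kk ^ 3 := by positivity
  have h31 : kk ^ 3 ≤ 1 := pow_le_one₀ hkk0 hkk1
  have h5 : 0 ≤ kk ^ 5 := by positivity
  have h51 : kk ^ 5 ≤ 1 := pow_le_one₀ hkk0 hkk1
  have u0 : kk * A ≤ P := by nlinarith
  have l0 : -P ≤ kk * A := by nlinarith
  have u1 : kk ^ 3 * (tr - B1 - B2) ≤ (t + 8 * K1 * P) := by nlinarith
  have l1 : -(t + 8 * K1 * P) ≤ kk ^ 3 * (tr - B1 - B2) := by nlinarith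
  have u4 : 3 * kk ^ 5 * D0 ≤ 3 * (4 * K1 ^ 2 * P) := by nlinarith
  have l4 : 0 ≤ 3 * kk ^ 5 * D0 := by positivity
  rw [abs_le]
  constructor <;> nlinarith [mul_nonneg ht0 (sub_nonneg.mpr hP1), mul_nonneg hK1 hP0,
    mul_nonneg (mul_nonneg hK1 hK1) hP0]

section kernelbounds
variable {X : Type*} [NormedAddCommGroup X] [InnerProductSpace ℝ X] [CompleteSpace X]


lemma core_bounds (C T : X →L[ℝ] X) (DU : X → X) (x y : X) :
    letI S := (ContinuousLinearMap.adjoint T).comp T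
    letI K1 := ‖S‖ * ‖C‖
    letI mx := (1 + ‖x‖ + ‖C (DU x)‖) ^ 2
    letI my := (1 + ‖y‖ + ‖C (DU y)‖) ^ 2
    |⟪x + C (DU x), y + C (DU y)⟫| ≤ mx * my
    ∧ |⟪S (C (x - y)), x - y⟫| ≤ 4 * K1 * (mx * my)
    ∧ |⟪S (C (C (DU x) - C (DU y))), x - y⟫| ≤ 4 * K1 * (mx * my)
    ∧ ‖C (S (x - y))‖ ^ 2 ≤ 4 * K1 ^ 2 * (mx * my)
    ∧ 1 ≤ mx * my := by
  set S := (ContinuousLinearMap.adjoint T).comp T with hS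
  have hux : (0:ℝ) ≤ ‖x‖ := norm_nonneg x
  have huy : (0:ℝ) ≤ ‖y‖ := norm_nonneg y
  have hwx : (0:ℝ) ≤ ‖C (DU x)‖ := norm_nonneg _
  have hwy : (0:ℝ) ≤ ‖C (DU y)‖ := norm_nonneg _
  have hK1 : (0:ℝ) ≤ ‖S‖ * ‖C‖ := mul_nonneg (norm_nonneg _) (norm_nonneg _)
  have hnx : (0:ℝ) ≤ 1 + ‖x‖ + ‖C (DU x)‖ := by linarith
  have hny : (0:ℝ) ≤ 1 + ‖y‖ + ‖C (DU y)‖ := by linarith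
  have h1x : (1:ℝ) ≤ (1 + ‖x‖ + ‖C (DU x)‖) ^ 2 := by nlinarith
  have h1y : (1:ℝ) ≤ (1 + ‖y‖ + ‖C (DU y)‖) ^ 2 := by nlinarith
  have hP1 : 1 ≤ (1 + ‖x‖ + ‖C (DU x)‖) ^ 2 * (1 + ‖y‖ + ‖C (DU y)‖) ^ 2 := by nlinarith
  have hz : ‖x - y‖ ≤ 2 * ((1 + ‖x‖ + ‖C (DU x)‖) * (1 + ‖y‖ + ‖C (DU y)‖)) := by
    have h := norm_sub_le x y
    nlinarith [mul_nonneg hwx hwy, mul_nonneg hux huy, mul_nonneg hux hwy, mul_nonneg hwx huy]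
  have hzsq : ‖x - y‖ ^ 2
      ≤ 4 * ((1 + ‖x‖ + ‖C (DU x)‖) ^ 2 * (1 + ‖y‖ + ‖C (DU y)‖) ^ 2) := by
    calc ‖x - y‖ ^ 2 ≤ (2 * ((1 + ‖x‖ + ‖C (DU x)‖) * (1 + ‖y‖ + ‖C (DU y)‖))) ^ 2 :=
          pow_le_pow_left₀ (norm_nonneg _) hz 2
      _ = 4 * ((1 + ‖x‖ + ‖C (DU x)‖) ^ 2 * (1 + ‖y‖ + ‖C (DU y)‖) ^ 2) := by ring
  have hv : ‖C (DU x) - C (DU y)‖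
      ≤ 2 * ((1 + ‖x‖ + ‖C (DU x)‖) * (1 + ‖y‖ + ‖C (DU y)‖)) := by
    have h := norm_sub_le (C (DU x)) (C (DU y))
    nlinarith [mul_nonneg hwx hwy, mul_nonneg hux huy, mul_nonneg hux hwy, mul_nonneg hwx huy]
  refine ⟨?_, ?_, ?_, ?_, hP1⟩
  · refine (abs_real_inner_le_norm _ _).trans ?_
    have hx1 : ‖x + C (DU x)‖ ≤ (1 + ‖x‖ + ‖C (DU x)‖) ^ 2 := by
      nlinarith [norm_add_le x (C (DU x))]
    have hy1 : ‖y + C (DU y)‖ ≤ (1 + ‖y‖ + ‖C (DU y)‖) ^ 2 := by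
      nlinarith [norm_add_le y (C (DU y))]
    exact mul_le_mul hx1 hy1 (norm_nonneg _) (by positivity)
  · refine (abs_real_inner_le_norm _ _).trans ?_
    have h1 : ‖S (C (x - y))‖ ≤ ‖S‖ * (‖C‖ * ‖x - y‖) :=
      (S.le_opNorm _).trans (by gcongr; exact C.le_opNorm _)
    calc ‖S (C (x - y))‖ * ‖x - y‖ ≤ (‖S‖ * (‖C‖ * ‖x - y‖)) * ‖x - y‖ :=
          mul_le_mul_of_nonneg_right h1 (norm_nonneg _)
      _ = (‖S‖ * ‖C‖) * ‖x - y‖ ^ 2 := by ring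
      _ ≤ (‖S‖ * ‖C‖) * (4 * ((1 + ‖x‖ + ‖C (DU x)‖) ^ 2 * (1 + ‖y‖ + ‖C (DU y)‖) ^ 2)) :=
          mul_le_mul_of_nonneg_left hzsq hK1
      _ = 4 * (‖S‖ * ‖C‖) * ((1 + ‖x‖ + ‖C (DU x)‖) ^ 2 * (1 + ‖y‖ + ‖C (DU y)‖) ^ 2) := by ring
  · refine (abs_real_inner_le_norm _ _).trans ?_
    have h1 : ‖S (C (C (DU x) - C (DU y)))‖ ≤ ‖S‖ * (‖C‖ * ‖C (DU x) - C (DU y)‖) :=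
      (S.le_opNorm _).trans (by gcongr; exact C.le_opNorm _)
    calc ‖S (C (C (DU x) - C (DU y)))‖ * ‖x - y‖
        ≤ (‖S‖ * (‖C‖ * ‖C (DU x) - C (DU y)‖)) * ‖x - y‖ :=
          mul_le_mul_of_nonneg_right h1 (norm_nonneg _)
      _ = (‖S‖ * ‖C‖) * (‖C (DU x) - C (DU y)‖ * ‖x - y‖) := by ring
      _ ≤ (‖S‖ * ‖C‖) * ((2 * ((1 + ‖x‖ + ‖C (DU x)‖) * (1 + ‖y‖ + ‖C (DU y)‖)))
            * (2 * ((1 + ‖x‖ + ‖C (DU x)‖) * (1 + ‖y‖ + ‖C (DU y)‖)))) :=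
          mul_le_mul_of_nonneg_left
            (mul_le_mul hv hz (norm_nonneg _) (by positivity)) hK1
      _ = 4 * (‖S‖ * ‖C‖) * ((1 + ‖x‖ + ‖C (DU x)‖) ^ 2 * (1 + ‖y‖ + ‖C (DU y)‖) ^ 2) := by ring
  · have h1 : ‖C (S (x - y))‖ ≤ (‖S‖ * ‖C‖) * ‖x - y‖ := by
      refine (C.le_opNorm _).trans ?_
      calc ‖C‖ * ‖S (x - y)‖ ≤ ‖C‖ * (‖S‖ * ‖x - y‖) :=
            mul_le_mul_of_nonneg_left (S.le_opNorm _) (norm_nonneg _)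
        _ = (‖S‖ * ‖C‖) * ‖x - y‖ := by ring
    calc ‖C (S (x - y))‖ ^ 2 ≤ ((‖S‖ * ‖C‖) * ‖x - y‖) ^ 2 :=
          pow_le_pow_left₀ (norm_nonneg _) h1 2
      _ = (‖S‖ * ‖C‖) ^ 2 * ‖x - y‖ ^ 2 := by ring
      _ ≤ (‖S‖ * ‖C‖) ^ 2 * (4 * ((1 + ‖x‖ + ‖C (DU x)‖) ^ 2 * (1 + ‖y‖ + ‖C (DU y)‖) ^ 2)) :=
          mul_le_mul_of_nonneg_left hzsq (by positivity)
      _ = 4 * (‖S‖ * ‖C‖) ^ 2 * ((1 + ‖x‖ + ‖C (DU x)‖) ^ 2 * (1 + ‖y‖ + ‖C (DU y)‖) ^ 2) := by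
          ring


lemma hvSE_bound (C T : X →L[ℝ] X) (DU : X → X) (e : ℕ → X) (l : ℕ → ℝ) (η : ℝ) (x y : X) :
    |hvSE C T DU e l η x y| ≤
      ((4 + 8 * (‖(ContinuousLinearMap.adjoint T).comp T‖ * ‖C‖)
          + |∑' i, l i ^ 2 * ⟪((ContinuousLinearMap.adjoint T).comp T) (e i), e i⟫|
          + 12 * (‖(ContinuousLinearMap.adjoint T).comp T‖ * ‖C‖) ^ 2) * (1 + η ^ 2 + η ^ 4))
        * ((1 + ‖x‖ + ‖C (DU x)‖) ^ 2 * (1 + ‖y‖ + ‖C (DU y)‖) ^ 2) := by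
  obtain ⟨hA, hB1, hB2, hD0, hP1⟩ := core_bounds C T DU x y
  have hK1nn : (0:ℝ) ≤ ‖(ContinuousLinearMap.adjoint T).comp T‖ * ‖C‖ :=
    mul_nonneg (norm_nonneg _) (norm_nonneg _)
  simp only [hvSE]
  have hE0 : (0:ℝ) ≤ Real.exp (-(η ^ 2 / 2) * ‖T (x - y)‖ ^ 2) := (Real.exp_pos _).le
  have hE1 : Real.exp (-(η ^ 2 / 2) * ‖T (x - y)‖ ^ 2) ≤ 1 :=
    Real.exp_le_one_iff.mpr (by nlinarith [sq_nonneg η, sq_nonneg ‖T (x - y)‖])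
  rw [_root_.abs_mul, _root_.abs_of_nonneg hE0]
  have hkey := abs_poly_bound _ _ _ _
    (|∑' i, l i ^ 2 * ⟪((ContinuousLinearMap.adjoint T).comp T) (e i), e i⟫|) _ _ _ η
    hA hB1 hB2 (le_refl _) hD0 (sq_nonneg _) hP1 hK1nn
  calc Real.exp (-(η ^ 2 / 2) * ‖T (x - y)‖ ^ 2) * _ ≤ 1 * (((4
      + 8 * (‖(ContinuousLinearMap.adjoint T).comp T‖ * ‖C‖)
      + |∑' i, l i ^ 2 * ⟪((ContinuousLinearMap.adjoint T).comp T) (e i), e i⟫|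
      + 12 * (‖(ContinuousLinearMap.adjoint T).comp T‖ * ‖C‖) ^ 2) * (1 + η ^ 2 + η ^ 4))
        * ((1 + ‖x‖ + ‖C (DU x)‖) ^ 2 * (1 + ‖y‖ + ‖C (DU y)‖) ^ 2)) :=
      mul_le_mul hE1 hkey (abs_nonneg _) one_pos.le
    _ = _ := one_mul _

lemma hvIMQ_bound (C T : X →L[ℝ] X) (DU : X → X) (e : ℕ → X) (l : ℕ → ℝ) (x y : X) :
    |hvIMQ C T DU e l x y| ≤
      (4 + 8 * (‖(ContinuousLinearMap.adjoint T).comp T‖ * ‖C‖)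
          + |∑' i, l i ^ 2 * ⟪((ContinuousLinearMap.adjoint T).comp T) (e i), e i⟫|
          + 12 * (‖(ContinuousLinearMap.adjoint T).comp T‖ * ‖C‖) ^ 2)
        * ((1 + ‖x‖ + ‖C (DU x)‖) ^ 2 * (1 + ‖y‖ + ‖C (DU y)‖) ^ 2) := by
  obtain ⟨hA, hB1, hB2, hD0, hP1⟩ := core_bounds C T DU x y
  have hK1nn : (0:ℝ) ≤ ‖(ContinuousLinearMap.adjoint T).comp T‖ * ‖C‖ :=
    mul_nonneg (norm_nonneg _) (norm_nonneg _)
  have hkk0 : (0:ℝ) ≤ (‖T (x - y)‖ ^ 2 + 1) ^ (-(1 / 2) : ℝ) :=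
    Real.rpow_nonneg (by positivity) _
  have hkk1 : (‖T (x - y)‖ ^ 2 + 1) ^ (-(1 / 2) : ℝ) ≤ 1 :=
    Real.rpow_le_one_of_one_le_of_nonpos (by nlinarith [sq_nonneg ‖T (x - y)‖]) (by norm_num)
  simp only [hvIMQ]
  exact abs_imq_bound _ _ _ _
    (|∑' i, l i ^ 2 * ⟪((ContinuousLinearMap.adjoint T).comp T) (e i), e i⟫|) _ _ _ _
    hA hB1 hB2 (le_refl _) hD0 (sq_nonneg _) hP1 hK1nn hkk0 hkk1

end kernelbounds


end helpers

/-- **Gaussian-mixture representation of the IMQ kernel Stein discrepancy**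
(identity established in the proof of Corollary 2): the double `Q`-integral of the
IMQ-`T` Stein kernel is the standard Gaussian mixture (over `η`) of the double
`Q`-integrals of the SE-`ηT` Stein kernels. -/
theorem imq_ksd_gaussian_mixture
    {X : Type*} [NormedAddCommGroup X] [InnerProductSpace ℝ X] [CompleteSpace X]
    [MeasurableSpace X] [BorelSpace X] [SecondCountableTopology X]
    -- the covariance operator and its eigendecomposition
    (C : X →L[ℝ] X) (hCsa : IsSelfAdjoint C)
    (e : HilbertBasis ℕ ℝ X) (l : ℕ → ℝ) (hl : ∀ i, 0 < l i)
    (hCe : ∀ i, C (e i) = l i • e i) (hltr : Summable l)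
    -- the potential `U` and its gradient `DU`
    (U : X → ℝ) (DU : X → X)
    (hU : ∀ x, HasFDerivAt U ((InnerProductSpace.toDual ℝ X) (DU x) : X →L[ℝ] ℝ) x)
    -- the candidate measure `Q` and its moment conditions
    (Q : Measure X) [IsProbabilityMeasure Q]
    (hQ2 : Integrable (fun x => ‖x‖ ^ 2) Q)
    (hQU : Integrable (fun x => ‖C (DU x)‖ ^ 2) Q)
    -- the operator `T`
    (T : X →L[ℝ] X) :
    ∫ x, ∫ y, hvIMQ C T DU (fun i => e i) l x y ∂Q ∂Q
      = ∫ η, (∫ x, ∫ y, hvSE C T DU (fun i => e i) l η x y ∂Q ∂Q)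
          ∂(gaussianReal 0 1) := by
  -- measurability of the gradient
  have hDU : Measurable DU := by
    have h2 : DU = fun x => (InnerProductSpace.toDual ℝ X).symm (fderiv ℝ U x) := by
      funext x
      rw [(hU x).fderiv, LinearIsometryEquiv.symm_apply_apply]
    rw [h2]
    exact (LinearIsometryEquiv.continuous _).measurable.comp (measurable_fderiv ℝ U)
  have hmg : Measurable fun x => C (DU x) := C.continuous.measurable.comp hDU
  -- integrable weight
  have hmInt : Integrable (fun x => (1 + ‖x‖ + ‖C (DU x)‖) ^ 2) Q := by
    refine Integrable.mono' (g := fun x => 3 * (1 + ‖x‖ ^ 2 + ‖C (DU x)‖ ^ 2)) ?_ ?_ ?_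
    · exact (((integrable_const 1).add hQ2).add hQU).const_mul 3
    · exact (((measurable_const.add measurable_norm).add
        hmg.norm).pow_const 2).aestronglyMeasurable
    · refine Eventually.of_forall fun x => ?_
      have h1 : (0:ℝ) ≤ ‖x‖ := norm_nonneg x
      have h2 : (0:ℝ) ≤ ‖C (DU x)‖ := norm_nonneg _
      show _ ≤ 3 * (1 + ‖x‖ ^ 2 + ‖C (DU x)‖ ^ 2)
      rw [Real.norm_eq_abs, _root_.abs_of_nonneg (by positivity)]
      nlinarith [sq_nonneg (‖x‖ - ‖C (DU x)‖), sq_nonneg (1 - ‖x‖), sq_nonneg (1 - ‖C (DU x)‖)]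
  have hprodInt : Integrable (fun p : X × X =>
      (1 + ‖p.1‖ + ‖C (DU p.1)‖) ^ 2 * (1 + ‖p.2‖ + ‖C (DU p.2)‖) ^ 2) (Q.prod Q) :=
    hmInt.mul_prod hmInt
  -- measurable components
  have hA_m : Measurable fun p : X × X => ⟪p.1 + C (DU p.1), p.2 + C (DU p.2)⟫ :=
    (measurable_fst.add (hmg.comp measurable_fst)).inner
      (measurable_snd.add (hmg.comp measurable_snd))
  have hB1c : Continuous fun p : X × X =>
      ⟪((ContinuousLinearMap.adjoint T).comp T) (C (p.1 - p.2)), p.1 - p.2⟫ :=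
    Continuous.inner
      ((((ContinuousLinearMap.adjoint T).comp T).continuous.comp
        (C.continuous.comp (continuous_fst.sub continuous_snd))))
      (continuous_fst.sub continuous_snd)
  have hB2m : Measurable fun p : X × X =>
      ⟪((ContinuousLinearMap.adjoint T).comp T) (C (C (DU p.1) - C (DU p.2))), p.1 - p.2⟫ :=
    (((((ContinuousLinearMap.adjoint T).comp T).continuous.comp
        C.continuous).measurable).comp
      ((hmg.comp measurable_fst).sub (hmg.comp measurable_snd))).inner
      (measurable_fst.sub measurable_snd)
  have hD0c : Continuous fun p : X × X =>
      ‖C (((ContinuousLinearMap.adjoint T).comp T) (p.1 - p.2))‖ ^ 2 :=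
    ((C.continuous.comp
      (((ContinuousLinearMap.adjoint T).comp T).continuous.comp
        (continuous_fst.sub continuous_snd))).norm).pow 2
  have hkc : Continuous fun p : X × X => (‖T (p.1 - p.2)‖ ^ 2 + 1) ^ (-(1/2) : ℝ) := by
    refine Continuous.rpow_const ?_ fun p => Or.inl (by positivity)
    exact ((T.continuous.comp (continuous_fst.sub continuous_snd)).norm.pow 2).add
      continuous_const
  have hmeasIMQ : Measurable fun p : X × X => hvIMQ C T DU (fun i => e i) l p.1 p.2 := by
    simp only [hvIMQ]
    exact ((hkc.measurable.mul hA_m).add ((hkc.measurable.pow_const 3).mul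
        ((measurable_const.sub hB1c.measurable).sub hB2m))).sub
      (((hkc.measurable.pow_const 5).const_mul 3).mul hD0c.measurable)
  have hmeasSE : Measurable fun z : ℝ × X × X =>
      hvSE C T DU (fun i => e i) l z.1 z.2.1 z.2.2 := by
    simp only [hvSE]
    have h1 : Measurable fun z : ℝ × X × X => -(z.1 ^ 2 / 2) :=
      ((measurable_fst.pow_const 2).div_const 2).neg
    have h2 : Measurable fun z : ℝ × X × X => ‖T (z.2.1 - z.2.2)‖ ^ 2 :=
      (((T.continuous.comp (continuous_fst.sub continuous_snd)).norm.pow 2).measurable).comp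
        measurable_snd
    exact ((h1.mul h2).exp).mul
      ((((((hA_m.comp measurable_snd).sub
            ((measurable_fst.pow_const 2).mul (hB1c.measurable.comp measurable_snd))).sub
          ((measurable_fst.pow_const 2).mul (hB2m.comp measurable_snd))).add
        ((measurable_fst.pow_const 2).mul measurable_const)).sub
      ((measurable_fst.pow_const 4).mul (hD0c.measurable.comp measurable_snd))))
  -- integrability statements
  have hIMQint : Integrable (fun p : X × X =>
      hvIMQ C T DU (fun i => e i) l p.1 p.2) (Q.prod Q) := by
    refine Integrable.mono' (hprodInt.const_mul
        (4 + 8 * (‖(ContinuousLinearMap.adjoint T).comp T‖ * ‖C‖)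
          + |∑' i, l i ^ 2 * ⟪((ContinuousLinearMap.adjoint T).comp T) (e i), e i⟫|
          + 12 * (‖(ContinuousLinearMap.adjoint T).comp T‖ * ‖C‖) ^ 2))
      hmeasIMQ.aestronglyMeasurable (Eventually.of_forall fun p => ?_)
    simpa [Real.norm_eq_abs] using hvIMQ_bound C T DU (fun i => e i) l p.1 p.2
  have hSEintp : ∀ η : ℝ, Integrable (fun p : X × X =>
      hvSE C T DU (fun i => e i) l η p.1 p.2) (Q.prod Q) := by
    intro η
    refine Integrable.mono' (hprodInt.const_mul
        ((4 + 8 * (‖(ContinuousLinearMap.adjoint T).comp T‖ * ‖C‖)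
          + |∑' i, l i ^ 2 * ⟪((ContinuousLinearMap.adjoint T).comp T) (e i), e i⟫|
          + 12 * (‖(ContinuousLinearMap.adjoint T).comp T‖ * ‖C‖) ^ 2) * (1 + η ^ 2 + η ^ 4)))
      ((hmeasSE.comp (measurable_const.prodMk measurable_id)).aestronglyMeasurable)
      (Eventually.of_forall fun p => ?_)
    simpa [Real.norm_eq_abs] using hvSE_bound C T DU (fun i => e i) l η p.1 p.2
  have hKint : Integrable (fun η : ℝ =>
      (4 + 8 * (‖(ContinuousLinearMap.adjoint T).comp T‖ * ‖C‖)
        + |∑' i, l i ^ 2 * ⟪((ContinuousLinearMap.adjoint T).comp T) (e i), e i⟫|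
        + 12 * (‖(ContinuousLinearMap.adjoint T).comp T‖ * ‖C‖) ^ 2) * (1 + η ^ 2 + η ^ 4))
      (gaussianReal 0 1) := by
    have h : Integrable (fun η : ℝ => 1 + η ^ 2 + η ^ 4) (gaussianReal 0 1) := by
      exact ((integrable_const (1:ℝ)).add (integrable_pow_gaussianReal01 2)).add
        (integrable_pow_gaussianReal01 4)
    exact h.const_mul _
  have hHint : Integrable (fun z : ℝ × X × X =>
      hvSE C T DU (fun i => e i) l z.1 z.2.1 z.2.2)
      ((gaussianReal 0 1).prod (Q.prod Q)) := by
    refine Integrable.mono' (hKint.mul_prod hprodInt) hmeasSE.aestronglyMeasurable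
      (Eventually.of_forall fun z => ?_)
    simpa [Real.norm_eq_abs] using hvSE_bound C T DU (fun i => e i) l z.1 z.2.1 z.2.2
  -- the chain of equalities
  calc ∫ x, ∫ y, hvIMQ C T DU (fun i => e i) l x y ∂Q ∂Q
      = ∫ p : X × X, hvIMQ C T DU (fun i => e i) l p.1 p.2 ∂(Q.prod Q) := by
        exact integral_integral hIMQint
    _ = ∫ p : X × X, (∫ η, hvSE C T DU (fun i => e i) l η p.1 p.2 ∂(gaussianReal 0 1))
          ∂(Q.prod Q) := by
        refine integral_congr_ae (Eventually.of_forall fun p => ?_)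
        exact (hvSE_integral C T DU (fun i => e i) l p.1 p.2).symm
    _ = ∫ η, (∫ p : X × X, hvSE C T DU (fun i => e i) l η p.1 p.2 ∂(Q.prod Q))
          ∂(gaussianReal 0 1) := by
        exact (integral_integral_swap (f := fun (η : ℝ) (p : X × X) =>
          hvSE C T DU (fun i => e i) l η p.1 p.2) hHint).symm
    _ = ∫ η, (∫ x, ∫ y, hvSE C T DU (fun i => e i) l η x y ∂Q ∂Q) ∂(gaussianReal 0 1) := by
        refine integral_congr_ae (Eventually.of_forall fun η => ?_)
        exact (integral_integral (hSEintp η)).symm
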